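/- Let p be a prime and d ≥ 2 with p ∤ d. For tuples u, v ∈ {0,...,d−2}^{n+1} with p(u_i+1) ≡ v_i+1 (mod d) for all i, and units a_0,...,a_n ∈ Z_p^×, define α_{u,v} = ∏_{i=0}^n a_i^{(p(u_i+1)−(v_i+1))/d} ( Σ_{m,r} (\frac{u_i+1}{d})_r Σ_{j=0}^r (p a_i^{p−1})^{r−j} / ((m−pj)! j!) ), where the sum is over integers m, r ≥ 0 with p(u_i+1) − (v_i+1) = d(m − pr). Then ord_p(α_{u,v}) ≥ 0. -/

import Mathlib

section AuxStmt17

variable {p : ℕ} [hp : Fact p.Prime]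

private lemma aux17_norm_nat_le_one (m : ℕ) : ‖(m : ℚ_[p])‖ ≤ 1 := by
  simpa using Padic.norm_int_le_one (p := p) (m : ℤ)

private lemma aux17_ascprod (s r : ℕ) :
    (∏ t ∈ Finset.range r, ((s : ℚ_[p]) + (t : ℚ_[p]))) = (s.ascFactorial r : ℚ_[p]) := by
  induction r with
  | zero => simp
  | succ r ih => rw [Finset.prod_range_succ, ih, Nat.ascFactorial_succ]; push_cast; ring

private lemma aux17_rising (r : ℕ) (x : ℚ_[p]) (hx : ‖x‖ ≤ 1) :
    ‖∏ t ∈ Finset.range r, (x + (t : ℚ_[p]))‖ ≤ ‖(r.factorial : ℚ_[p])‖ := by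
  have hcont : Continuous fun y : ℤ_[p] =>
      ‖∏ t ∈ Finset.range r, ((y : ℚ_[p]) + (t : ℚ_[p]))‖ := by fun_prop
  have hclosed : IsClosed {y : ℤ_[p] |
      ‖∏ t ∈ Finset.range r, ((y : ℚ_[p]) + (t : ℚ_[p]))‖ ≤ ‖(r.factorial : ℚ_[p])‖} :=
    isClosed_le hcont continuous_const
  have hsub : Set.range (Nat.cast : ℕ → ℤ_[p]) ⊆ {y : ℤ_[p] |
      ‖∏ t ∈ Finset.range r, ((y : ℚ_[p]) + (t : ℚ_[p]))‖ ≤ ‖(r.factorial : ℚ_[p])‖} := by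
    rintro _ ⟨s, rfl⟩
    have hcast : (((s : ℤ_[p]) : ℚ_[p])) = ((s : ℕ) : ℚ_[p]) := by push_cast; ring
    simp only [Set.mem_setOf_eq, hcast, aux17_ascprod]
    obtain ⟨t, ht⟩ := Nat.factorial_dvd_ascFactorial s r
    rw [ht]
    push_cast
    rw [norm_mul]
    calc ‖(r.factorial : ℚ_[p])‖ * ‖(t : ℚ_[p])‖
        ≤ ‖(r.factorial : ℚ_[p])‖ * 1 :=
          mul_le_mul_of_nonneg_left (aux17_norm_nat_le_one t) (norm_nonneg _)
      _ = _ := mul_one _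
  have hall := closure_minimal hsub hclosed
  have hdense := (PadicInt.denseRange_natCast (p := p))
  exact hall (hdense (⟨x, hx⟩ : ℤ_[p]))

private lemma aux17_val (c j k : ℕ) (hc : c < p) :
    padicValNat p ((c + p * k).factorial) + padicValNat p (j.factorial)
      ≤ padicValNat p ((j + k).factorial) + k := by
  have h1 : padicValNat p ((c + p * k).factorial) = padicValNat p (k.factorial) + k := by
    rw [add_comm c (p * k), padicValNat_factorial_mul_add k hc, padicValNat_factorial_mul]
  obtain ⟨t, ht⟩ := Nat.factorial_mul_factorial_dvd_factorial_add j k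
  have ht0 : t ≠ 0 := by
    intro h; rw [h, mul_zero] at ht; exact (Nat.factorial_ne_zero (j + k)) ht
  have h2 : padicValNat p ((j + k).factorial)
      = padicValNat p (j.factorial) + padicValNat p (k.factorial) + padicValNat p t := by
    rw [ht, padicValNat.mul (mul_ne_zero j.factorial_ne_zero k.factorial_ne_zero) ht0,
      padicValNat.mul j.factorial_ne_zero k.factorial_ne_zero]
  omega

private lemma aux17_norm (c j k : ℕ) (hc : c < p) :
    ‖(((j + k).factorial : ℚ_[p]))‖ * ‖(p : ℚ_[p])‖ ^ k
      ≤ ‖(((c + p * k).factorial : ℚ_[p]))‖ * ‖((j.factorial : ℚ_[p]))‖ := by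
  have hfac : ∀ m : ℕ, ((m.factorial : ℚ_[p])) ≠ 0 :=
    fun m => Nat.cast_ne_zero.mpr m.factorial_ne_zero
  have hp0 : (0:ℝ) < p := by exact_mod_cast hp.out.pos
  have hp1 : (1:ℝ) ≤ p := by exact_mod_cast hp.out.one_le
  rw [Padic.norm_eq_zpow_neg_valuation (hfac (j+k)), Padic.norm_eq_zpow_neg_valuation (hfac (c + p*k)),
    Padic.norm_eq_zpow_neg_valuation (hfac j), Padic.norm_p,
    Padic.valuation_natCast, Padic.valuation_natCast, Padic.valuation_natCast]
  have h1 : ((p:ℝ)⁻¹) ^ k = (p:ℝ) ^ (-(k:ℤ)) := by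
    rw [inv_pow, ← zpow_natCast, ← zpow_neg]
  rw [h1, ← zpow_add₀ (ne_of_gt hp0), ← zpow_add₀ (ne_of_gt hp0)]
  apply zpow_le_zpow_right₀ hp1
  have := aux17_val c j k hc
  omega

end AuxStmt17

/-- Integrality of the diagonal Frobenius entries: with `c_i = (p(u_i+1)-(v_i+1))/d`,
`α_{u,v} = ∏_i a_i^{c_i} (∑_{m,r ≥ 0, m - pr = c_i} ((u_i+1)/d)_r
  ∑_{j=0}^r (p a_i^{p-1})^{r-j} / ((m-pj)! j!))`
satisfies `ord_p(α_{u,v}) ≥ 0`, i.e. `‖α_{u,v}‖ ≤ 1`.  The sum over the pairs `(m, r)`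
with `m - pr = c_i` is written as a `tsum` over `r`, with `m = c_i + pr` when this is
nonnegative and the term being `0` otherwise. -/
theorem stmt_17 (p : ℕ) [hp : Fact p.Prime] (d n : ℕ) (hd : 2 ≤ d) (hpd : ¬ p ∣ d)
    (u v : Fin (n + 1) → ℕ) (hu : ∀ i, u i ≤ d - 2) (hv : ∀ i, v i ≤ d - 2)
    (hcong : ∀ i, (d : ℤ) ∣ ((p : ℤ) * (u i + 1) - (v i + 1)))
    (a : Fin (n + 1) → ℚ_[p]) (ha : ∀ i, ‖a i‖ = 1) :
    ‖∏ i, (a i ^ (((p : ℤ) * (u i + 1) - (v i + 1)) / d)) *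
        (∑' r : ℕ,
          (∏ t ∈ Finset.range r, ((u i + 1 : ℚ_[p]) / (d : ℚ_[p]) + (t : ℚ_[p]))) *
          (if 0 ≤ ((p : ℤ) * (u i + 1) - (v i + 1)) / d + (p : ℤ) * r then
            ∑ j ∈ Finset.range (r + 1),
              ((p : ℚ_[p]) * a i ^ (p - 1)) ^ (r - j) /
                (((((((p : ℤ) * (u i + 1) - (v i + 1)) / d + (p : ℤ) * r).toNat
                    - p * j).factorial : ℚ_[p]) * (j.factorial : ℚ_[p])))
          else 0))‖ ≤ 1 := by
  rw [norm_prod]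
  apply Finset.prod_le_one (fun i _ => norm_nonneg _)
  intro i _
  rw [norm_mul, norm_zpow, ha i, one_zpow, one_mul]
  apply IsUltrametricDist.norm_tsum_le_of_forall_le_of_nonneg zero_le_one
  intro r
  -- identify the constant `c` and show `0 ≤ c < p`
  obtain ⟨q, hq⟩ := hcong i
  have hd0 : (0:ℤ) < (d:ℤ) := by exact_mod_cast lt_of_lt_of_le two_pos hd
  have hqd : ((p : ℤ) * (u i + 1) - (v i + 1)) / d = q := by
    rw [hq, Int.mul_ediv_cancel_left _ (ne_of_gt hd0)]
  have hub : (u i : ℤ) + 2 ≤ d := by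
    have h1 := hu i
    have h2 : u i + 2 ≤ d := by omega
    exact_mod_cast h2
  have hvb : (v i : ℤ) + 2 ≤ d := by
    have h1 := hv i
    have h2 : v i + 2 ≤ d := by omega
    exact_mod_cast h2
  have hp2 : (2:ℤ) ≤ p := by exact_mod_cast hp.out.two_le
  have he_lb : -(d:ℤ) < (d:ℤ) * q := by
    rw [← hq]
    have h1 : (2:ℤ) * 1 ≤ (p:ℤ) * ((u i : ℤ) + 1) := by
      apply mul_le_mul hp2 (by omega) (by norm_num) (by omega)
    omega
  have he_ub : (d:ℤ) * q < (d:ℤ) * p := by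
    rw [← hq]
    have h1 : (p:ℤ) * ((u i : ℤ) + 1) ≤ (p:ℤ) * ((d:ℤ) - 1) := by
      apply mul_le_mul_of_nonneg_left (by omega) (by omega)
    have h2 : (p:ℤ) * ((d:ℤ) - 1) = (d:ℤ) * p - p := by ring
    omega
  have hq0 : 0 ≤ q := by
    by_contra h
    push_neg at h
    have : (d:ℤ) * q ≤ (d:ℤ) * (-1) := mul_le_mul_of_nonneg_left (by omega) (by omega)
    omega
  have hqp : q < (p:ℤ) := lt_of_mul_lt_mul_left he_ub (by omega)
  have hcq : ((q.toNat : ℕ) : ℤ) = q := Int.toNat_of_nonneg hq0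
  set c : ℕ := q.toNat with hc
  have hcp : c < p := by omega
  rw [hqd, if_pos (by positivity : (0:ℤ) ≤ q + (p:ℤ) * r)]
  have hM : (q + (p:ℤ) * (r:ℤ)) = ((c + p * r : ℕ) : ℤ) := by push_cast; omega
  rw [hM, Int.toNat_natCast]
  -- bound the finite inner sum termwise
  rw [Finset.mul_sum]
  apply IsUltrametricDist.norm_sum_le_of_forall_le_of_nonneg zero_le_one
  intro j hj
  have hjr : j ≤ r := by
    have := Finset.mem_range.mp hj
    omega
  obtain ⟨k, hrk⟩ : ∃ k, r = j + k := ⟨r - j, by omega⟩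
  have hprj : p * r = p * j + p * k := by rw [hrk, Nat.mul_add]
  rw [show c + p * r - p * j = c + p * k from by omega, show r - j = k from by omega]
  -- norms of the pieces
  have hxnorm : ‖((u i : ℚ_[p]) + 1) / (d : ℚ_[p])‖ ≤ 1 := by
    have hdnorm : ‖(d : ℚ_[p])‖ = 1 := by
      have h1 : ‖(d : ℚ_[p])‖ ≤ 1 := aux17_norm_nat_le_one d
      have h2 : ¬ ‖(d : ℚ_[p])‖ < 1 := by
        intro h
        have h3 : ‖((d:ℤ) : ℚ_[p])‖ < 1 := by push_cast; exact h
        rw [Padic.norm_intCast_lt_one_iff] at h3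
        exact hpd (by exact_mod_cast h3)
      rcases lt_or_eq_of_le h1 with h | h
      · exact absurd h h2
      · exact h
    have h4 : ((u i : ℚ_[p]) + 1) = ((u i + 1 : ℕ) : ℚ_[p]) := by push_cast; ring
    rw [norm_div, hdnorm, div_one, h4]
    exact aux17_norm_nat_le_one _
  have hR := aux17_rising r (((u i : ℚ_[p]) + 1) / (d : ℚ_[p])) hxnorm
  rw [norm_mul]
  have hterm : ‖((p : ℚ_[p]) * a i ^ (p - 1)) ^ k /
      ((((c + p * k).factorial : ℚ_[p])) * ((j.factorial : ℚ_[p])))‖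
      = ‖(p : ℚ_[p])‖ ^ k / (‖(((c + p * k).factorial : ℚ_[p]))‖ * ‖((j.factorial : ℚ_[p]))‖) := by
    rw [norm_div, norm_mul, norm_pow, norm_mul, norm_pow, ha i, one_pow, mul_one]
  rw [hterm]
  have hApos : 0 < ‖(((c + p * k).factorial : ℚ_[p]))‖ :=
    norm_pos_iff.mpr (Nat.cast_ne_zero.mpr (Nat.factorial_ne_zero _))
  have hBpos : 0 < ‖((j.factorial : ℚ_[p]))‖ :=
    norm_pos_iff.mpr (Nat.cast_ne_zero.mpr (Nat.factorial_ne_zero _))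
  calc ‖∏ t ∈ Finset.range r, (((u i : ℚ_[p]) + 1) / (d : ℚ_[p]) + (t : ℚ_[p]))‖ *
        (‖(p : ℚ_[p])‖ ^ k / (‖(((c + p * k).factorial : ℚ_[p]))‖ * ‖((j.factorial : ℚ_[p]))‖))
      ≤ ‖(r.factorial : ℚ_[p])‖ *
        (‖(p : ℚ_[p])‖ ^ k / (‖(((c + p * k).factorial : ℚ_[p]))‖ * ‖((j.factorial : ℚ_[p]))‖)) :=
        mul_le_mul_of_nonneg_right hR (by positivity)
    _ = (‖(r.factorial : ℚ_[p])‖ * ‖(p : ℚ_[p])‖ ^ k) /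
        (‖(((c + p * k).factorial : ℚ_[p]))‖ * ‖((j.factorial : ℚ_[p]))‖) := by ring
    _ ≤ 1 := by
        rw [div_le_one (by positivity), hrk]
        exact aux17_norm c j k hcp
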